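/- For all integers r ≥ s ≥ 3, the strong grid P_r ⊠ P_s satisfies mob(P_r ⊠ P_s) = 4. -/

import Mathlib

open SimpleGraph

variable {V : Type*} {W : Type*}

/-- `S` is a general position set of `G`: no shortest path of `G` contains more than two
vertices of `S`. -/
def IsGenPosSet (G : SimpleGraph V) (S : Set V) : Prop :=
  ∀ ⦃u v : V⦄ (p : G.Walk u v), p.IsPath → p.length = G.dist u v →
    (S ∩ {x | x ∈ p.support}).ncard ≤ 2

/-- `S` is a mutual visibility set of `G`: any two vertices of `S` are joined by a shortest
path containing no further vertex of `S`. -/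
def IsMutVisSet (G : SimpleGraph V) (S : Set V) : Prop :=
  ∀ ⦃u⦄, u ∈ S → ∀ ⦃v⦄, v ∈ S → ∃ p : G.Walk u v,
    p.IsPath ∧ p.length = G.dist u v ∧ ∀ x ∈ p.support, x ∈ S → x = u ∨ x = v

/-- A legal move (with respect to the position property `P`) of a configuration of `t` robots
on distinct vertices: one robot moves to an adjacent unoccupied vertex, and the resulting set
of occupied vertices again satisfies `P`. -/
def LegalMove (G : SimpleGraph V) (P : Set V → Prop) {t : ℕ} (f g : Fin t ↪ V) : Prop :=
  ∃ i : Fin t, G.Adj (f i) (g i) ∧ g i ∉ Set.range ⇑f ∧ (∀ j, j ≠ i → g j = f j) ∧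
    P (Set.range ⇑g)

/-- A configuration is a mobile `P`-configuration if it satisfies `P` and there is a sequence
of legal moves starting from it such that every vertex is visited by some robot. -/
def IsMobileConfig (G : SimpleGraph V) (P : Set V → Prop) {t : ℕ} (f : Fin t ↪ V) : Prop :=
  P (Set.range ⇑f) ∧ ∃ (N : ℕ) (c : ℕ → (Fin t ↪ V)), c 0 = f ∧
    (∀ k < N, LegalMove G P (c k) (c (k + 1))) ∧ ∀ v : V, ∃ k ≤ N, ∃ i, c k i = v

/-- A configuration is completely mobile if it is mobile and moreover every robot can visit
every vertex via a sequence of legal moves. -/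
def IsCompletelyMobileConfig (G : SimpleGraph V) (P : Set V → Prop) {t : ℕ}
    (f : Fin t ↪ V) : Prop :=
  IsMobileConfig G P f ∧ ∀ (v : V) (i : Fin t), ∃ (N : ℕ) (c : ℕ → (Fin t ↪ V)), c 0 = f ∧
    (∀ k < N, LegalMove G P (c k) (c (k + 1))) ∧ ∃ k ≤ N, c k i = v

/-- The mobile general position number `mob(G)`. -/
noncomputable def mobGP (G : SimpleGraph V) : ℕ :=
  sSup {t : ℕ | ∃ f : Fin t ↪ V, IsMobileConfig G (IsGenPosSet G) f}

/-- The completely mobile general position number `mob*(G)`. -/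
noncomputable def cmobGP (G : SimpleGraph V) : ℕ :=
  sSup {t : ℕ | ∃ f : Fin t ↪ V, IsCompletelyMobileConfig G (IsGenPosSet G) f}

/-- The mobile mutual visibility number `mobmv(G)`. -/
noncomputable def mobMV (G : SimpleGraph V) : ℕ :=
  sSup {t : ℕ | ∃ f : Fin t ↪ V, IsMobileConfig G (IsMutVisSet G) f}

/-- The completely mobile mutual visibility number `mobmv*(G)`. -/
noncomputable def cmobMV (G : SimpleGraph V) : ℕ :=
  sSup {t : ℕ | ∃ f : Fin t ↪ V, IsCompletelyMobileConfig G (IsMutVisSet G) f}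

/-- The mutual visibility number `μ(G)`. -/
noncomputable def muMV (G : SimpleGraph V) : ℕ :=
  sSup {n : ℕ | ∃ S : Set V, IsMutVisSet G S ∧ S.ncard = n}

/-- `μ₂(G)`: the largest cardinality of a mutual visibility set whose vertices are pairwise at
distance at most `2`. -/
noncomputable def muMV2 (G : SimpleGraph V) : ℕ :=
  sSup {n : ℕ | ∃ S : Set V, IsMutVisSet G S ∧ (∀ u ∈ S, ∀ v ∈ S, G.dist u v ≤ 2) ∧
    S.ncard = n}

/-- The join `G ∨ H` of two graphs: the disjoint union together with all edges between the
two vertex sets. -/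
def graphJoin (G : SimpleGraph V) (H : SimpleGraph W) : SimpleGraph (V ⊕ W) where
  Adj x y := match x, y with
    | Sum.inl a, Sum.inl b => G.Adj a b
    | Sum.inr a, Sum.inr b => H.Adj a b
    | Sum.inl _, Sum.inr _ => True
    | Sum.inr _, Sum.inl _ => True
  symm := by constructor; rintro (a | a) (b | b) h <;> simp_all <;> exact h.symm
  loopless := by constructor; rintro (a | a) h <;> simp_all

/-- The strong product `G ⊠ H` of two graphs. -/
def strongProd (G : SimpleGraph V) (H : SimpleGraph W) : SimpleGraph (V × W) where
  Adj x y := (x.1 = y.1 ∧ H.Adj x.2 y.2) ∨ (x.2 = y.2 ∧ G.Adj x.1 y.1) ∨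
    (G.Adj x.1 y.1 ∧ H.Adj x.2 y.2)
  symm := by
    constructor
    rintro ⟨a, b⟩ ⟨c, d⟩ (⟨h1, h2⟩ | ⟨h1, h2⟩ | ⟨h1, h2⟩)
    · exact Or.inl ⟨h1.symm, h2.symm⟩
    · exact Or.inr (Or.inl ⟨h1.symm, h2.symm⟩)
    · exact Or.inr (Or.inr ⟨h1.symm, h2.symm⟩)
  loopless := by constructor; rintro ⟨a, b⟩ (⟨_, h⟩ | ⟨_, h⟩ | ⟨h, _⟩) <;> simp_all

/-- A vertex `u` is a hub if any two distinct non-adjacent vertices different from `u` are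
both adjacent to `u`. -/
def IsHub (G : SimpleGraph V) (u : V) : Prop :=
  ∀ ⦃w₁ w₂ : V⦄, w₁ ≠ u → w₂ ≠ u → w₁ ≠ w₂ → ¬G.Adj w₁ w₂ → G.Adj w₁ u ∧ G.Adj w₂ u

/-- A block graph: every block is complete; equivalently, the vertices of any cycle form a
clique. -/
def IsBlockGraph (G : SimpleGraph V) : Prop :=
  ∀ (v : V) (c : G.Walk v v), c.IsCycle → G.IsClique {x | x ∈ c.support}

/-- The graph obtained from the complete graph `K n` (on vertices `1, ..., n`) by attaching
one pendant vertex `0`, adjacent only to vertex `1`. -/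
def cliqueWithLeaf (n : ℕ) : SimpleGraph (Fin (n + 1)) :=
  SimpleGraph.fromRel (fun i j => (i ≠ 0 ∧ j ≠ 0) ∨ (i = 0 ∧ j = 1))

/-- `G` is (isomorphic to) a path graph. -/
def IsPathGraph (G : SimpleGraph V) : Prop :=
  ∃ n : ℕ, Nonempty (G ≃g pathGraph n)


section Aux


abbrev GG (r s : ℕ) : SimpleGraph (Fin r × Fin s) := strongProd (pathGraph r) (pathGraph s)

def cheb {r s : ℕ} (u v : Fin r × Fin s) : ℕ :=
  max (Nat.dist u.1.val v.1.val) (Nat.dist u.2.val v.2.val)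

lemma gg_adj {r s : ℕ} (u v : Fin r × Fin s) :
    (GG r s).Adj u v ↔
      (Nat.dist u.1.val v.1.val ≤ 1 ∧ Nat.dist u.2.val v.2.val ≤ 1 ∧ u ≠ v) := by
  obtain ⟨⟨a, ha⟩, ⟨b, hb⟩⟩ := u
  obtain ⟨⟨c, hc⟩, ⟨d, hd⟩⟩ := v
  simp only [GG, strongProd, pathGraph_adj, Nat.dist, Prod.ext_iff, Fin.ext_iff, Prod.mk.injEq,
    ne_eq, not_and]
  constructor
  · rintro (⟨h1, h2⟩ | ⟨h1, h2⟩ | ⟨h1, h2⟩) <;> exact ⟨by omega, by omega, by omega⟩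
  · rintro ⟨h1, h2, h3⟩
    omega

lemma gg_walk_len_ge {r s : ℕ} {u v : Fin r × Fin s} (p : (GG r s).Walk u v) :
    cheb u v ≤ p.length := by
  induction p with
  | nil => simp [cheb, Nat.dist]
  | @cons a b c h q ih =>
    rw [gg_adj] at h
    simp only [Walk.length_cons, cheb, Nat.dist] at *
    omega

lemma gg_exists_walk {r s : ℕ} (n : ℕ) (u v : Fin r × Fin s) (h : cheb u v = n) :
    ∃ p : (GG r s).Walk u v, p.length = n := by
  induction n generalizing u with
  | zero =>
    have : u = v := by
      obtain ⟨⟨a, ha⟩, ⟨b, hb⟩⟩ := u; obtain ⟨⟨c, hc⟩, ⟨d, hd⟩⟩ := v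
      simp only [cheb, Nat.dist] at h
      simp only [Prod.ext_iff, Fin.ext_iff]
      omega
    subst this; exact ⟨Walk.nil, rfl⟩
  | succ n ih =>
    obtain ⟨⟨a, ha⟩, ⟨b, hb⟩⟩ := u; obtain ⟨⟨c, hc⟩, ⟨d, hd⟩⟩ := v
    obtain ⟨a', ha'lt, hA⟩ : ∃ a', a' < r ∧
        ((a < c ∧ a' = a + 1) ∨ (c < a ∧ a' = a - 1) ∨ (a = c ∧ a' = a)) := by
      rcases lt_trichotomy a c with h | h | h
      exacts [⟨a + 1, by omega, Or.inl ⟨h, rfl⟩⟩, ⟨a, by omega, Or.inr (Or.inr ⟨h, rfl⟩)⟩,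
        ⟨a - 1, by omega, Or.inr (Or.inl ⟨h, rfl⟩)⟩]
    obtain ⟨b', hb'lt, hB⟩ : ∃ b', b' < s ∧
        ((b < d ∧ b' = b + 1) ∨ (d < b ∧ b' = b - 1) ∨ (b = d ∧ b' = b)) := by
      rcases lt_trichotomy b d with h | h | h
      exacts [⟨b + 1, by omega, Or.inl ⟨h, rfl⟩⟩, ⟨b, by omega, Or.inr (Or.inr ⟨h, rfl⟩)⟩,
        ⟨b - 1, by omega, Or.inr (Or.inl ⟨h, rfl⟩)⟩]
    simp only [cheb, Nat.dist] at h
    have hadj : (GG r s).Adj (⟨a, ha⟩, ⟨b, hb⟩) (⟨a', ha'lt⟩, ⟨b', hb'lt⟩) := by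
      rw [gg_adj]
      refine ⟨by simp [Nat.dist]; omega, by simp [Nat.dist]; omega, ?_⟩
      simp only [ne_eq, Prod.ext_iff, Fin.ext_iff, not_and]
      omega
    have hch : cheb (⟨a', ha'lt⟩, ⟨b', hb'lt⟩) (⟨c, hc⟩, ⟨d, hd⟩) = n := by
      simp only [cheb, Nat.dist]
      omega
    obtain ⟨q, hq⟩ := ih _ hch
    exact ⟨Walk.cons hadj q, by simp [hq]⟩

lemma gg_reachable {r s : ℕ} (u v : Fin r × Fin s) : (GG r s).Reachable u v := by
  obtain ⟨p, -⟩ := gg_exists_walk (cheb u v) u v rfl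
  exact ⟨p⟩

lemma gg_dist {r s : ℕ} (u v : Fin r × Fin s) : (GG r s).dist u v = cheb u v := by
  refine le_antisymm ?_ ?_
  · obtain ⟨p, hp⟩ := gg_exists_walk (cheb u v) u v rfl
    simpa [hp] using SimpleGraph.dist_le p
  · obtain ⟨p, hp⟩ := (gg_reachable u v).exists_walk_length_eq_dist
    simpa [hp] using gg_walk_len_ge p


section GPchar
variable {V : Type*} [DecidableEq V] {G : SimpleGraph V}


lemma isPath_of_length_eq_dist {u v : V} (p : G.Walk u v) (h : p.length = G.dist u v) :
    p.IsPath := by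
  induction p with
  | nil => exact Walk.IsPath.nil
  | @cons a b c hadj q ih =>
    simp only [Walk.length_cons] at h
    have hr : G.Reachable b c := ⟨q⟩
    obtain ⟨q', hq'⟩ := hr.exists_walk_length_eq_dist
    have h1 : G.dist a c ≤ q'.length + 1 := by
      simpa using SimpleGraph.dist_le (Walk.cons hadj q')
    have h2 : G.dist b c ≤ q.length := SimpleGraph.dist_le q
    have h3 : q.length = G.dist b c := by omega
    have hqp := ih h3
    rw [Walk.cons_isPath_iff]
    refine ⟨hqp, fun hmem => ?_⟩
    have h4 := SimpleGraph.dist_le (q.dropUntil a hmem)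
    have h5 := Walk.length_dropUntil_le q hmem
    omega

lemma split_dist {u v w : V} (p : G.Walk u v) (hl : p.length = G.dist u v)
    (h : w ∈ p.support) :
    G.dist u w + G.dist w v = G.dist u v ∧
    (p.takeUntil w h).length = G.dist u w ∧ (p.dropUntil w h).length = G.dist w v := by
  have h1 : (p.takeUntil w h).length + (p.dropUntil w h).length = p.length := by
    rw [← Walk.length_append, Walk.take_spec]
  have h2 := SimpleGraph.dist_le (p.takeUntil w h)
  have h3 := SimpleGraph.dist_le (p.dropUntil w h)
  have h4 : G.dist u v ≤ G.dist u w + G.dist w v := by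
    obtain ⟨q1, e1⟩ := (Reachable.exists_walk_length_eq_dist ⟨p.takeUntil w h⟩)
    obtain ⟨q2, e2⟩ := (Reachable.exists_walk_length_eq_dist ⟨p.dropUntil w h⟩)
    have := SimpleGraph.dist_le (q1.append q2)
    rwa [Walk.length_append, e1, e2] at this
  omega

lemma order_two {u v x y : V} (p : G.Walk u v) (hl : p.length = G.dist u v)
    (hx : x ∈ p.support) (hy : y ∈ p.support) :
    (G.dist x y + G.dist y v = G.dist x v) ∨ (G.dist u y + G.dist y x = G.dist u x) := by
  have hsp := split_dist p hl hx
  rw [← Walk.take_spec p hx] at hy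
  rw [Walk.mem_support_append_iff] at hy
  rcases hy with hy | hy
  · exact Or.inr (split_dist (p.takeUntil x hx) hsp.2.1 hy).1
  · exact Or.inl (split_dist (p.dropUntil x hx) hsp.2.2 hy).1

/-- Three distinct vertices on a common shortest path: one is metrically between the others. -/
lemma between_of_three {u v a b c : V} (p : G.Walk u v) (hl : p.length = G.dist u v)
    (ha : a ∈ p.support) (hb : b ∈ p.support) (hc : c ∈ p.support) :
    (G.dist a b + G.dist b c = G.dist a c) ∨ (G.dist b a + G.dist a c = G.dist b c) ∨
    (G.dist a c + G.dist c b = G.dist a b) := by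
  have Fa := (split_dist p hl ha).1
  have Fb := (split_dist p hl hb).1
  have Fc := (split_dist p hl hc).1
  have Pab := order_two p hl ha hb
  have Pac := order_two p hl ha hc
  have Pbc := order_two p hl hb hc
  have cab : G.dist a b = G.dist b a := SimpleGraph.dist_comm ..
  have cac : G.dist a c = G.dist c a := SimpleGraph.dist_comm ..
  have cbc : G.dist b c = G.dist c b := SimpleGraph.dist_comm ..
  omega

lemma no_between_of_genPos {S : Set V} (hreach : ∀ x y : V, G.Reachable x y)
    (hS : IsGenPosSet G S) {a b c : V} (ha : a ∈ S) (hb : b ∈ S) (hc : c ∈ S)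
    (hab : a ≠ b) (hbc : b ≠ c) (hac : a ≠ c) :
    G.dist a b + G.dist b c ≠ G.dist a c := by
  intro hbtw
  obtain ⟨p1, e1⟩ := (hreach a b).exists_walk_length_eq_dist
  obtain ⟨p2, e2⟩ := (hreach b c).exists_walk_length_eq_dist
  have hlen : (p1.append p2).length = G.dist a c := by rw [Walk.length_append]; omega
  have hpath := isPath_of_length_eq_dist _ hlen
  have hcard := hS (p1.append p2) hpath hlen
  have hfin : (S ∩ {x | x ∈ (p1.append p2).support}).Finite :=
    Set.Finite.subset (p1.append p2).support.finite_toSet fun x hx => hx.2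
  have hsub : {a, b, c} ⊆ S ∩ {x | x ∈ (p1.append p2).support} := by
    rintro x (rfl | rfl | rfl)
    · exact ⟨ha, by simp [Walk.mem_support_append_iff]⟩
    · exact ⟨hb, by simp [Walk.mem_support_append_iff]⟩
    · exact ⟨hc, by simp [Walk.mem_support_append_iff]⟩
  have h3 : ({a, b, c} : Set V).ncard = 3 := by
    rw [Set.ncard_insert_of_notMem (by simp [hab, hac]),
      Set.ncard_insert_of_notMem (by simp [hbc]), Set.ncard_singleton]
  have := Set.ncard_le_ncard hsub hfin
  omega

lemma genPos_of_no_between {S : Set V}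
    (h : ∀ a ∈ S, ∀ b ∈ S, ∀ c ∈ S, a ≠ b → b ≠ c → a ≠ c →
      G.dist a b + G.dist b c ≠ G.dist a c) : IsGenPosSet G S := by
  intro u v p hp hl
  by_contra hcon
  have hfin : (S ∩ {x | x ∈ p.support}).Finite :=
    Set.Finite.subset p.support.finite_toSet fun x hx => hx.2
  have h3 : 2 < (S ∩ {x | x ∈ p.support}).ncard := by omega
  rw [Set.two_lt_ncard hfin] at h3
  obtain ⟨a, ⟨haS, hasup⟩, b, ⟨hbS, hbsup⟩, c, ⟨hcS, hcsup⟩, hab, hac, hbc⟩ := h3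
  rcases between_of_three p hl hasup hbsup hcsup with H | H | H
  · exact h a haS b hbS c hcS hab hbc hac H
  · exact h b hbS a haS c hcS (Ne.symm hab) hac hbc H
  · exact h a haS c hcS b hbS hac (Ne.symm hbc) hab H

end GPchar

def btw0 (a b c : ℕ) : Prop := (a ≤ b ∧ b ≤ c) ∨ (c ≤ b ∧ b ≤ a)

lemma five_mono (v : Fin 5 → ℕ) :
    ∃ i j k : Fin 5, i < j ∧ j < k ∧ btw0 (v i) (v j) (v k) := by
  have H : btw0 (v 0) (v 1) (v 2) ∨ btw0 (v 0) (v 1) (v 3) ∨ btw0 (v 0) (v 1) (v 4) ∨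
      btw0 (v 0) (v 2) (v 3) ∨ btw0 (v 0) (v 2) (v 4) ∨ btw0 (v 0) (v 3) (v 4) ∨
      btw0 (v 1) (v 2) (v 3) ∨ btw0 (v 1) (v 2) (v 4) ∨ btw0 (v 1) (v 3) (v 4) ∨
      btw0 (v 2) (v 3) (v 4) := by
    simp only [btw0]; omega
  rcases H with h | h | h | h | h | h | h | h | h | h
  exacts [⟨0, 1, 2, by decide, by decide, h⟩, ⟨0, 1, 3, by decide, by decide, h⟩,
    ⟨0, 1, 4, by decide, by decide, h⟩, ⟨0, 2, 3, by decide, by decide, h⟩,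
    ⟨0, 2, 4, by decide, by decide, h⟩, ⟨0, 3, 4, by decide, by decide, h⟩,
    ⟨1, 2, 3, by decide, by decide, h⟩, ⟨1, 2, 4, by decide, by decide, h⟩,
    ⟨1, 3, 4, by decide, by decide, h⟩, ⟨2, 3, 4, by decide, by decide, h⟩]

lemma five_point (q w : Fin 5 → ℕ) :
    ∃ a b c : Fin 5, a ≠ b ∧ b ≠ c ∧ a ≠ c ∧ btw0 (q a) (q b) (q c) ∧
      btw0 (w a) (w b) (w c) := by
  set σ := Tuple.sort q with hσ
  have mono := Tuple.monotone_sort q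
  obtain ⟨i, j, k, hij, hjk, hb⟩ := five_mono (w ∘ σ)
  refine ⟨σ i, σ j, σ k, ?_, ?_, ?_, ?_, hb⟩
  · exact fun h => absurd (σ.injective h) (by omega)
  · exact fun h => absurd (σ.injective h) (by omega)
  · exact fun h => absurd (σ.injective h) (by omega)
  · exact Or.inl ⟨mono hij.le, mono hjk.le⟩

lemma cheb_pair {r s : ℕ} (u v : Fin r × Fin s) :
    2 * cheb u v = Nat.dist (u.1.val + u.2.val) (v.1.val + v.2.val) +
      Nat.dist (u.1.val + (s - u.2.val)) (v.1.val + (s - v.2.val)) := by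
  have h1 := u.2.isLt; have h2 := v.2.isLt
  simp only [cheb, Nat.dist]
  omega

lemma cheb_btw_add {r s : ℕ} (u1 u2 u3 : Fin r × Fin s)
    (hq : btw0 (u1.1.val + u1.2.val) (u2.1.val + u2.2.val) (u3.1.val + u3.2.val))
    (hw : btw0 (u1.1.val + (s - u1.2.val)) (u2.1.val + (s - u2.2.val))
      (u3.1.val + (s - u3.2.val))) :
    cheb u1 u2 + cheb u2 u3 = cheb u1 u3 := by
  have e12 := cheb_pair u1 u2
  have e23 := cheb_pair u2 u3
  have e13 := cheb_pair u1 u3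
  simp only [btw0] at hq hw
  have hq' : Nat.dist (u1.1.val + u1.2.val) (u2.1.val + u2.2.val) +
      Nat.dist (u2.1.val + u2.2.val) (u3.1.val + u3.2.val) =
      Nat.dist (u1.1.val + u1.2.val) (u3.1.val + u3.2.val) := by
    simp only [Nat.dist]; omega
  have hw' : Nat.dist (u1.1.val + (s - u1.2.val)) (u2.1.val + (s - u2.2.val)) +
      Nat.dist (u2.1.val + (s - u2.2.val)) (u3.1.val + (s - u3.2.val)) =
      Nat.dist (u1.1.val + (s - u1.2.val)) (u3.1.val + (s - u3.2.val)) := by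
    simp only [Nat.dist]; omega
  omega

lemma upper_le_four {r s t : ℕ} (f : Fin t ↪ Fin r × Fin s)
    (hgp : IsGenPosSet (GG r s) (Set.range ⇑f)) : t ≤ 4 := by
  by_contra hcon
  push_neg at hcon
  have h5 : 5 ≤ t := hcon
  set pts : Fin 5 → Fin r × Fin s := fun i => f (Fin.castLE h5 i) with hpts
  obtain ⟨a, b, c, hab, hbc, hac, hq, hw⟩ :=
    five_point (fun i => (pts i).1.val + (pts i).2.val)
      (fun i => (pts i).1.val + (s - (pts i).2.val))
  have hinj : Function.Injective pts := fun i j h => by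
    exact Fin.castLE_injective h5 (f.injective h)
  refine no_between_of_genPos (fun x y => gg_reachable x y) hgp
    ⟨Fin.castLE h5 a, rfl⟩ ⟨Fin.castLE h5 b, rfl⟩ ⟨Fin.castLE h5 c, rfl⟩
    (fun h => hab (hinj h)) (fun h => hbc (hinj h)) (fun h => hac (hinj h)) ?_
  show (GG r s).dist (pts a) (pts b) + (GG r s).dist (pts b) (pts c)
      = (GG r s).dist (pts a) (pts c)
  rw [gg_dist, gg_dist, gg_dist]
  exact cheb_btw_add _ _ _ hq hw


section Steps
variable {V : Type*} {G : SimpleGraph V} {P : Set V → Prop} {t : ℕ}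

def Steps (G : SimpleGraph V) (P : Set V → Prop) (f g : Fin t ↪ V) (A : Set V) : Prop :=
  ∃ (N : ℕ) (c : ℕ → (Fin t ↪ V)), c 0 = f ∧ c N = g ∧
    (∀ k < N, LegalMove G P (c k) (c (k + 1))) ∧ ∀ v ∈ A, ∃ k ≤ N, ∃ i, c k i = v

lemma Steps.refl (f : Fin t ↪ V) : Steps G P f f (Set.range ⇑f) :=
  ⟨0, fun _ => f, rfl, rfl, fun k hk => absurd hk (by omega),
    fun v ⟨i, hi⟩ => ⟨0, le_refl 0, i, hi⟩⟩

lemma Steps.single {f g : Fin t ↪ V} (h : LegalMove G P f g) :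
    Steps G P f g (Set.range ⇑f ∪ Set.range ⇑g) := by
  refine ⟨1, fun k => if k = 0 then f else g, by simp, by simp, fun k hk => ?_, fun v hv => ?_⟩
  · have : k = 0 := by omega
    subst this; simpa using h
  · rcases hv with ⟨i, hi⟩ | ⟨i, hi⟩
    · exact ⟨0, by omega, i, by simpa using hi⟩
    · exact ⟨1, le_refl 1, i, by simpa using hi⟩

lemma Steps.trans {f g h : Fin t ↪ V} {A B : Set V} (h1 : Steps G P f g A)
    (h2 : Steps G P g h B) : Steps G P f h (A ∪ B) := by
  obtain ⟨N1, c1, e10, e11, l1, v1⟩ := h1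
  obtain ⟨N2, c2, e20, e21, l2, v2⟩ := h2
  have e : c1 N1 = c2 0 := by rw [e11, e20]
  refine ⟨N1 + N2, fun k => if k ≤ N1 then c1 k else c2 (k - N1), by simp [e10], ?_, ?_, ?_⟩
  · rcases Nat.eq_zero_or_pos N2 with h0 | h0
    · subst h0
      simp only [Nat.add_zero, le_refl, if_pos]
      rw [e, e21]
    · have : ¬ N1 + N2 ≤ N1 := by omega
      simp only [this, if_false, Nat.add_sub_cancel_left, e21]
  · intro k hk
    rcases Nat.lt_or_ge k N1 with hk1 | hk1
    · have t1 : k ≤ N1 := by omega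
      have t2 : k + 1 ≤ N1 := by omega
      simpa only [t1, t2, if_pos] using l1 k hk1
    · rcases Nat.eq_or_lt_of_le hk1 with hk2 | hk2
      · have hkN : k = N1 := hk2.symm
        subst hkN
        have t2 : ¬ k + 1 ≤ k := by omega
        simp only [le_refl, t2, if_pos, if_false, e]
        have h1 : k + 1 - k = 1 := by omega
        rw [h1]
        exact l2 0 (by omega)
      · have t1 : ¬ k ≤ N1 := by omega
        have t2 : ¬ k + 1 ≤ N1 := by omega
        simp only [t1, t2, if_false]
        have : k + 1 - N1 = (k - N1) + 1 := by omega
        rw [this]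
        exact l2 (k - N1) (by omega)
  · intro v hv
    rcases hv with hv | hv
    · obtain ⟨k, hk, i, hi⟩ := v1 v hv
      exact ⟨k, by omega, i, by simp only [hk, if_pos]; exact hi⟩
    · obtain ⟨k, hk, i, hi⟩ := v2 v hv
      rcases Nat.eq_zero_or_pos k with h0 | h0
      · subst h0
        refine ⟨N1, by omega, i, ?_⟩
        simp only [le_refl, if_pos, e]
        exact hi
      · refine ⟨N1 + k, by omega, i, ?_⟩
        have : ¬ N1 + k ≤ N1 := by omega
        simp only [this, if_false, Nat.add_sub_cancel_left]
        exact hi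

lemma Steps.mono {f g : Fin t ↪ V} {A B : Set V} (h : Steps G P f g A) (hBA : B ⊆ A) :
    Steps G P f g B := by
  obtain ⟨N, c, e0, e1, l, vis⟩ := h
  exact ⟨N, c, e0, e1, l, fun v hv => vis v (hBA hv)⟩

lemma Steps.isMobile {f g : Fin t ↪ V} (h : Steps G P f g Set.univ)
    (hP : P (Set.range ⇑f)) : IsMobileConfig G P f := by
  obtain ⟨N, c, e0, e1, l, vis⟩ := h
  exact ⟨hP, N, c, e0, l, fun v => vis v (Set.mem_univ v)⟩

end Steps


section Gadgets
variable {r s : ℕ}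

@[simp] lemma vec4_mk0 {α : Type*} (A B C D : α) (h : (0:ℕ) < 4) : ![A,B,C,D] ⟨0,h⟩ = A := rfl
@[simp] lemma vec4_mk1 {α : Type*} (A B C D : α) (h : (1:ℕ) < 4) : ![A,B,C,D] ⟨1,h⟩ = B := rfl
@[simp] lemma vec4_mk2 {α : Type*} (A B C D : α) (h : (2:ℕ) < 4) : ![A,B,C,D] ⟨2,h⟩ = C := rfl
@[simp] lemma vec4_mk3 {α : Type*} (A B C D : α) (h : (3:ℕ) < 4) : ![A,B,C,D] ⟨3,h⟩ = D := rfl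

abbrev NB {r s : ℕ} (u v w : Fin r × Fin s) : Prop :=
  (GG r s).dist u v + (GG r s).dist v w ≠ (GG r s).dist u w

lemma NB_rev {u v w : Fin r × Fin s} (h : NB u v w) : NB w v u := by
  have c1 := SimpleGraph.dist_comm (G := GG r s) (u := u) (v := v)
  have c2 := SimpleGraph.dist_comm (G := GG r s) (u := v) (v := w)
  have c3 := SimpleGraph.dist_comm (G := GG r s) (u := u) (v := w)
  unfold NB at *
  omega

lemma gp_quad (A B C D : Fin r × Fin s)
    (h1 : NB A B C) (h2 : NB A C B) (h3 : NB B A C)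
    (h4 : NB A B D) (h5 : NB A D B) (h6 : NB B A D)
    (h7 : NB A C D) (h8 : NB A D C) (h9 : NB C A D)
    (h10 : NB B C D) (h11 : NB B D C) (h12 : NB C B D) :
    IsGenPosSet (GG r s) (Set.range ![A, B, C, D]) := by
  have g1 := NB_rev h1; have g2 := NB_rev h2; have g3 := NB_rev h3
  have g4 := NB_rev h4; have g5 := NB_rev h5; have g6 := NB_rev h6
  have g7 := NB_rev h7; have g8 := NB_rev h8; have g9 := NB_rev h9
  have g10 := NB_rev h10; have g11 := NB_rev h11; have g12 := NB_rev h12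
  apply genPos_of_no_between
  rintro a ⟨i, rfl⟩ b ⟨j, rfl⟩ c ⟨k, rfl⟩ hab hbc hac
  fin_cases i <;> fin_cases j <;> fin_cases k <;>
    simp only [vec4_mk0, vec4_mk1, vec4_mk2, vec4_mk3, Matrix.cons_val_zero,
      Matrix.cons_val_one, Matrix.head_cons, Fin.isValue, ne_eq] at hab hbc hac ⊢ <;>
    first
      | exact absurd trivial hab
      | exact absurd trivial hbc
      | exact absurd trivial hac
      | exact absurd rfl hab
      | exact absurd rfl hbc
      | exact absurd rfl hac
      | assumption

lemma inj4 {A B C D : Fin r × Fin s} (n1 : A ≠ B) (n2 : A ≠ C) (n3 : A ≠ D)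
    (n4 : B ≠ C) (n5 : B ≠ D) (n6 : C ≠ D) : Function.Injective ![A, B, C, D] := by
  intro i j hij
  fin_cases i <;> fin_cases j <;> simp_all

lemma legal4 {p p' : Fin 4 → Fin r × Fin s} (hp : Function.Injective p)
    (hp' : Function.Injective p') (i : Fin 4) (hadj : (GG r s).Adj (p i) (p' i))
    (hfresh : ∀ j, p' i ≠ p j) (hfix : ∀ j, j ≠ i → p' j = p j)
    (hgp : IsGenPosSet (GG r s) (Set.range p')) :
    LegalMove (GG r s) (IsGenPosSet (GG r s)) (⟨p, hp⟩ : Fin 4 ↪ Fin r × Fin s) ⟨p', hp'⟩ :=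
  ⟨i, hadj, by rintro ⟨j, hj⟩; exact hfresh j hj.symm, hfix, hgp⟩

def Dp (r s a c : ℕ) (h1 : a + 1 < s) (h2 : c + 2 < r) : Fin 4 → Fin r × Fin s :=
  ![(⟨c, by omega⟩, ⟨a, by omega⟩), (⟨c, by omega⟩, ⟨a + 1, by omega⟩),
    (⟨c + 2, by omega⟩, ⟨a, by omega⟩), (⟨c + 2, by omega⟩, ⟨a + 1, by omega⟩)]

lemma Dp_inj (a c : ℕ) (h1 : a + 1 < s) (h2 : c + 2 < r) :
    Function.Injective (Dp r s a c h1 h2) := by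
  apply inj4 <;> (simp only [ne_eq, Prod.mk.injEq, Fin.mk.injEq, not_and]; omega)

def Dcfg (r s a c : ℕ) (h1 : a + 1 < s) (h2 : c + 2 < r) : Fin 4 ↪ Fin r × Fin s :=
  ⟨Dp r s a c h1 h2, Dp_inj a c h1 h2⟩

lemma gp_Dp (a c : ℕ) (h1 : a + 1 < s) (h2 : c + 2 < r) :
    IsGenPosSet (GG r s) (Set.range (Dp r s a c h1 h2)) := by
  apply gp_quad <;> (simp only [NB, gg_dist, cheb, Nat.dist]; omega)

@[simp] lemma vec4_0 {α : Type*} (A B C D : α) : ![A,B,C,D] 0 = A := rfl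
@[simp] lemma vec4_1 {α : Type*} (A B C D : α) : ![A,B,C,D] 1 = B := rfl
@[simp] lemma vec4_2 {α : Type*} (A B C D : α) : ![A,B,C,D] 2 = C := rfl
@[simp] lemma vec4_3 {α : Type*} (A B C D : α) : ![A,B,C,D] 3 = D := rfl

def Vp1 (r s a c : ℕ) (h1 : a + 2 < s) (h2 : c + 2 < r) : Fin 4 → Fin r × Fin s :=
  ![(⟨c, by omega⟩, ⟨a, by omega⟩), (⟨c, by omega⟩, ⟨a + 2, by omega⟩),
    (⟨c + 2, by omega⟩, ⟨a, by omega⟩), (⟨c + 2, by omega⟩, ⟨a + 1, by omega⟩)]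

def Vp2 (r s a c : ℕ) (h1 : a + 2 < s) (h2 : c + 2 < r) : Fin 4 → Fin r × Fin s :=
  ![(⟨c, by omega⟩, ⟨a, by omega⟩), (⟨c, by omega⟩, ⟨a + 2, by omega⟩),
    (⟨c + 2, by omega⟩, ⟨a, by omega⟩), (⟨c + 2, by omega⟩, ⟨a + 2, by omega⟩)]

def Vp3 (r s a c : ℕ) (h1 : a + 2 < s) (h2 : c + 2 < r) : Fin 4 → Fin r × Fin s :=
  ![(⟨c, by omega⟩, ⟨a, by omega⟩), (⟨c, by omega⟩, ⟨a + 2, by omega⟩),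
    (⟨c + 2, by omega⟩, ⟨a + 1, by omega⟩), (⟨c + 2, by omega⟩, ⟨a + 2, by omega⟩)]

lemma Vp1_inj (a c : ℕ) (h1 : a + 2 < s) (h2 : c + 2 < r) :
    Function.Injective (Vp1 r s a c h1 h2) := by
  apply inj4 <;> (simp only [ne_eq, Prod.mk.injEq, Fin.mk.injEq, not_and]; omega)

lemma Vp2_inj (a c : ℕ) (h1 : a + 2 < s) (h2 : c + 2 < r) :
    Function.Injective (Vp2 r s a c h1 h2) := by
  apply inj4 <;> (simp only [ne_eq, Prod.mk.injEq, Fin.mk.injEq, not_and]; omega)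

lemma Vp3_inj (a c : ℕ) (h1 : a + 2 < s) (h2 : c + 2 < r) :
    Function.Injective (Vp3 r s a c h1 h2) := by
  apply inj4 <;> (simp only [ne_eq, Prod.mk.injEq, Fin.mk.injEq, not_and]; omega)

lemma gp_Vp1 (a c : ℕ) (h1 : a + 2 < s) (h2 : c + 2 < r) :
    IsGenPosSet (GG r s) (Set.range (Vp1 r s a c h1 h2)) := by
  apply gp_quad <;> (simp only [NB, gg_dist, cheb, Nat.dist]; omega)

lemma gp_Vp2 (a c : ℕ) (h1 : a + 2 < s) (h2 : c + 2 < r) :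
    IsGenPosSet (GG r s) (Set.range (Vp2 r s a c h1 h2)) := by
  apply gp_quad <;> (simp only [NB, gg_dist, cheb, Nat.dist]; omega)

lemma gp_Vp3 (a c : ℕ) (h1 : a + 2 < s) (h2 : c + 2 < r) :
    IsGenPosSet (GG r s) (Set.range (Vp3 r s a c h1 h2)) := by
  apply gp_quad <;> (simp only [NB, gg_dist, cheb, Nat.dist]; omega)

lemma vdown (a c : ℕ) (h1 : a + 2 < s) (h2 : c + 2 < r) :
    Steps (GG r s) (IsGenPosSet (GG r s)) (Dcfg r s a c (by omega) h2)
      (Dcfg r s (a + 1) c (by omega) h2)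
      {v : Fin r × Fin s | (v.1.val = c ∨ v.1.val = c + 2) ∧ a ≤ v.2.val ∧ v.2.val ≤ a + 2} := by
  have m1 : LegalMove (GG r s) (IsGenPosSet (GG r s)) (Dcfg r s a c (by omega) h2)
      ⟨Vp1 r s a c h1 h2, Vp1_inj a c h1 h2⟩ := by
    refine legal4 _ _ 1 ?_ ?_ ?_ (gp_Vp1 a c h1 h2)
    · simp only [Dcfg, Dp, Vp1, vec4_1, gg_adj, Nat.dist, ne_eq, Prod.mk.injEq,
        Fin.mk.injEq, not_and]
      omega
    · intro j
      fin_cases j <;>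
        (simp only [Dcfg, Dp, Vp1, vec4_0, vec4_1, vec4_2, vec4_3, vec4_mk0, vec4_mk1,
          vec4_mk2, vec4_mk3, ne_eq, Prod.mk.injEq, Fin.mk.injEq, not_and]; omega)
    · intro j hj
      fin_cases j <;> first | rfl | exact absurd rfl hj
  have m2 : LegalMove (GG r s) (IsGenPosSet (GG r s))
      ⟨Vp1 r s a c h1 h2, Vp1_inj a c h1 h2⟩ ⟨Vp2 r s a c h1 h2, Vp2_inj a c h1 h2⟩ := by
    refine legal4 _ _ 3 ?_ ?_ ?_ (gp_Vp2 a c h1 h2)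
    · simp only [Vp1, Vp2, vec4_3, gg_adj, Nat.dist, ne_eq, Prod.mk.injEq,
        Fin.mk.injEq, not_and]
      omega
    · intro j
      fin_cases j <;>
        (simp only [Vp1, Vp2, vec4_0, vec4_1, vec4_2, vec4_3, vec4_mk0, vec4_mk1,
          vec4_mk2, vec4_mk3, ne_eq, Prod.mk.injEq, Fin.mk.injEq, not_and]; omega)
    · intro j hj
      fin_cases j <;> first | rfl | exact absurd rfl hj
  have m3 : LegalMove (GG r s) (IsGenPosSet (GG r s))
      ⟨Vp2 r s a c h1 h2, Vp2_inj a c h1 h2⟩ ⟨Vp3 r s a c h1 h2, Vp3_inj a c h1 h2⟩ := by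
    refine legal4 _ _ 2 ?_ ?_ ?_ (gp_Vp3 a c h1 h2)
    · simp only [Vp2, Vp3, vec4_2, gg_adj, Nat.dist, ne_eq, Prod.mk.injEq,
        Fin.mk.injEq, not_and]
      omega
    · intro j
      fin_cases j <;>
        (simp only [Vp2, Vp3, vec4_0, vec4_1, vec4_2, vec4_3, vec4_mk0, vec4_mk1,
          vec4_mk2, vec4_mk3, ne_eq, Prod.mk.injEq, Fin.mk.injEq, not_and]; omega)
    · intro j hj
      fin_cases j <;> first | rfl | exact absurd rfl hj
  have m4 : LegalMove (GG r s) (IsGenPosSet (GG r s))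
      ⟨Vp3 r s a c h1 h2, Vp3_inj a c h1 h2⟩ (Dcfg r s (a + 1) c (by omega) h2) := by
    refine legal4 _ _ 0 ?_ ?_ ?_ (gp_Dp (a + 1) c (by omega) h2)
    · simp only [Dcfg, Dp, Vp3, vec4_0, gg_adj, Nat.dist, ne_eq, Prod.mk.injEq,
        Fin.mk.injEq, not_and]
      omega
    · intro j
      fin_cases j <;>
        (simp only [Dcfg, Dp, Vp3, vec4_0, vec4_1, vec4_2, vec4_3, vec4_mk0, vec4_mk1,
          vec4_mk2, vec4_mk3, ne_eq, Prod.mk.injEq, Fin.mk.injEq, not_and]; omega)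
    · intro j hj
      fin_cases j <;> first | rfl | exact absurd rfl hj
  refine ((((Steps.single m1).trans (Steps.single m2)).trans (Steps.single m3)).trans
    (Steps.single m4)).mono ?_
  rintro v ⟨hx, hy1, hy2⟩
  have key : v ∈ Set.range (Dp r s a c (by omega) h2) ∨ v ∈ Set.range (Vp1 r s a c h1 h2) ∨
      v ∈ Set.range (Vp2 r s a c h1 h2) := by
    rcases hx with h | h <;>
      rcases (by omega : v.2.val = a ∨ v.2.val = a + 1 ∨ v.2.val = a + 2) with h2' | h2' | h2'
    · exact Or.inl ⟨0, by simp [Dp, Prod.ext_iff, Fin.ext_iff]; omega⟩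
    · exact Or.inl ⟨1, by simp [Dp, Prod.ext_iff, Fin.ext_iff]; omega⟩
    · exact Or.inr (Or.inl ⟨1, by simp [Vp1, Prod.ext_iff, Fin.ext_iff]; omega⟩)
    · exact Or.inl ⟨2, by simp [Dp, Prod.ext_iff, Fin.ext_iff]; omega⟩
    · exact Or.inl ⟨3, by simp [Dp, Prod.ext_iff, Fin.ext_iff]; omega⟩
    · exact Or.inr (Or.inr ⟨3, by simp [Vp2, Prod.ext_iff, Fin.ext_iff]; omega⟩)
  simp only [Set.mem_union]
  rcases key with h | h | h
  · exact Or.inl (Or.inl (Or.inl (Or.inl h)))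
  · exact Or.inl (Or.inl (Or.inl (Or.inr h)))
  · exact Or.inl (Or.inl (Or.inr (Or.inr h)))


def Hp3 (r s c : ℕ) (h1 : 2 < s) (h2 : c + 3 < r) : Fin 4 → Fin r × Fin s :=
  ![(⟨c, by omega⟩, ⟨0, by omega⟩), (⟨c, by omega⟩, ⟨2, by omega⟩), (⟨c+3, by omega⟩, ⟨0, by omega⟩), (⟨c+2, by omega⟩, ⟨2, by omega⟩)]

lemma Hp3_inj (c : ℕ) (h1 : 2 < s) (h2 : c + 3 < r) :
    Function.Injective (Hp3 r s c h1 h2) := by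
  apply inj4 <;> (simp only [ne_eq, Prod.mk.injEq, Fin.mk.injEq, not_and]; omega)

lemma gp_Hp3 (c : ℕ) (h1 : 2 < s) (h2 : c + 3 < r) :
    IsGenPosSet (GG r s) (Set.range (Hp3 r s c h1 h2)) := by
  apply gp_quad <;> (simp only [NB, gg_dist, cheb, Nat.dist]; omega)

def Hp4 (r s c : ℕ) (h1 : 2 < s) (h2 : c + 3 < r) : Fin 4 → Fin r × Fin s :=
  ![(⟨c+1, by omega⟩, ⟨0, by omega⟩), (⟨c, by omega⟩, ⟨2, by omega⟩), (⟨c+3, by omega⟩, ⟨0, by omega⟩), (⟨c+2, by omega⟩, ⟨2, by omega⟩)]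

lemma Hp4_inj (c : ℕ) (h1 : 2 < s) (h2 : c + 3 < r) :
    Function.Injective (Hp4 r s c h1 h2) := by
  apply inj4 <;> (simp only [ne_eq, Prod.mk.injEq, Fin.mk.injEq, not_and]; omega)

lemma gp_Hp4 (c : ℕ) (h1 : 2 < s) (h2 : c + 3 < r) :
    IsGenPosSet (GG r s) (Set.range (Hp4 r s c h1 h2)) := by
  apply gp_quad <;> (simp only [NB, gg_dist, cheb, Nat.dist]; omega)

def Hp5 (r s c : ℕ) (h1 : 2 < s) (h2 : c + 3 < r) : Fin 4 → Fin r × Fin s :=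
  ![(⟨c+1, by omega⟩, ⟨0, by omega⟩), (⟨c, by omega⟩, ⟨2, by omega⟩), (⟨c+3, by omega⟩, ⟨0, by omega⟩), (⟨c+3, by omega⟩, ⟨1, by omega⟩)]

lemma Hp5_inj (c : ℕ) (h1 : 2 < s) (h2 : c + 3 < r) :
    Function.Injective (Hp5 r s c h1 h2) := by
  apply inj4 <;> (simp only [ne_eq, Prod.mk.injEq, Fin.mk.injEq, not_and]; omega)

lemma gp_Hp5 (c : ℕ) (h1 : 2 < s) (h2 : c + 3 < r) :
    IsGenPosSet (GG r s) (Set.range (Hp5 r s c h1 h2)) := by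
  apply gp_quad <;> (simp only [NB, gg_dist, cheb, Nat.dist]; omega)

def Ep2 (r s : ℕ) (h1 : 2 < s) (h2 : 2 < r) : Fin 4 → Fin r × Fin s :=
  ![(⟨0, by omega⟩, ⟨0, by omega⟩), (⟨0, by omega⟩, ⟨2, by omega⟩), (⟨2, by omega⟩, ⟨0, by omega⟩), (⟨1, by omega⟩, ⟨2, by omega⟩)]

lemma Ep2_inj (h1 : 2 < s) (h2 : 2 < r) :
    Function.Injective (Ep2 r s h1 h2) := by
  apply inj4 <;> (simp only [ne_eq, Prod.mk.injEq, Fin.mk.injEq, not_and]; omega)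

lemma gp_Ep2 (h1 : 2 < s) (h2 : 2 < r) :
    IsGenPosSet (GG r s) (Set.range (Ep2 r s h1 h2)) := by
  apply gp_quad <;> (simp only [NB, gg_dist, cheb, Nat.dist]; omega)

def Ep4 (r s : ℕ) (h1 : 2 < s) (h2 : 2 < r) : Fin 4 → Fin r × Fin s :=
  ![(⟨1, by omega⟩, ⟨0, by omega⟩), (⟨0, by omega⟩, ⟨2, by omega⟩), (⟨2, by omega⟩, ⟨0, by omega⟩), (⟨2, by omega⟩, ⟨1, by omega⟩)]

lemma Ep4_inj (h1 : 2 < s) (h2 : 2 < r) :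
    Function.Injective (Ep4 r s h1 h2) := by
  apply inj4 <;> (simp only [ne_eq, Prod.mk.injEq, Fin.mk.injEq, not_and]; omega)

lemma gp_Ep4 (h1 : 2 < s) (h2 : 2 < r) :
    IsGenPosSet (GG r s) (Set.range (Ep4 r s h1 h2)) := by
  apply gp_quad <;> (simp only [NB, gg_dist, cheb, Nat.dist]; omega)

def Ep5 (r s : ℕ) (h1 : 2 < s) (h2 : 2 < r) : Fin 4 → Fin r × Fin s :=
  ![(⟨1, by omega⟩, ⟨0, by omega⟩), (⟨1, by omega⟩, ⟨1, by omega⟩), (⟨2, by omega⟩, ⟨0, by omega⟩), (⟨2, by omega⟩, ⟨1, by omega⟩)]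

lemma Ep5_inj (h1 : 2 < s) (h2 : 2 < r) :
    Function.Injective (Ep5 r s h1 h2) := by
  apply inj4 <;> (simp only [ne_eq, Prod.mk.injEq, Fin.mk.injEq, not_and]; omega)

lemma gp_Ep5 (h1 : 2 < s) (h2 : 2 < r) :
    IsGenPosSet (GG r s) (Set.range (Ep5 r s h1 h2)) := by
  apply gp_quad <;> (simp only [NB, gg_dist, cheb, Nat.dist]; omega)

lemma vup (a c : ℕ) (h1 : a + 2 < s) (h2 : c + 2 < r) :
    Steps (GG r s) (IsGenPosSet (GG r s)) (Dcfg r s (a + 1) c (by omega) h2)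
      (Dcfg r s a c (by omega) h2) (Set.range (Dp r s (a + 1) c (by omega) h2)) := by
  have m1 : LegalMove (GG r s) (IsGenPosSet (GG r s)) (Dcfg r s (a + 1) (c) (by omega) (h2)) (⟨Vp3 r s a c h1 h2, Vp3_inj a c h1 h2⟩ : Fin 4 ↪ Fin r × Fin s) := by
    refine legal4 _ _ 0 ?_ ?_ ?_ (gp_Vp3 a c h1 h2)
    · simp only [Vp3, Vp3, Dcfg, Dp, vec4_0, vec4_1, vec4_2, vec4_3, gg_adj,
        Nat.dist, ne_eq, Prod.mk.injEq, Fin.mk.injEq, not_and]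
      omega
    · intro j
      fin_cases j <;>
        (simp only [Vp3, Vp3, Dcfg, Dp, vec4_0, vec4_1, vec4_2, vec4_3, vec4_mk0,
          vec4_mk1, vec4_mk2, vec4_mk3, ne_eq, Prod.mk.injEq, Fin.mk.injEq, not_and]; omega)
    · intro j hj
      fin_cases j <;> first | rfl | exact absurd rfl hj

  have m2 : LegalMove (GG r s) (IsGenPosSet (GG r s)) (⟨Vp3 r s a c h1 h2, Vp3_inj a c h1 h2⟩ : Fin 4 ↪ Fin r × Fin s) (⟨Vp2 r s a c h1 h2, Vp2_inj a c h1 h2⟩ : Fin 4 ↪ Fin r × Fin s) := by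
    refine legal4 _ _ 2 ?_ ?_ ?_ (gp_Vp2 a c h1 h2)
    · simp only [Vp3, Vp2, Dcfg, Dp, vec4_0, vec4_1, vec4_2, vec4_3, gg_adj,
        Nat.dist, ne_eq, Prod.mk.injEq, Fin.mk.injEq, not_and]
      omega
    · intro j
      fin_cases j <;>
        (simp only [Vp3, Vp2, Dcfg, Dp, vec4_0, vec4_1, vec4_2, vec4_3, vec4_mk0,
          vec4_mk1, vec4_mk2, vec4_mk3, ne_eq, Prod.mk.injEq, Fin.mk.injEq, not_and]; omega)
    · intro j hj
      fin_cases j <;> first | rfl | exact absurd rfl hj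

  have m3 : LegalMove (GG r s) (IsGenPosSet (GG r s)) (⟨Vp2 r s a c h1 h2, Vp2_inj a c h1 h2⟩ : Fin 4 ↪ Fin r × Fin s) (⟨Vp1 r s a c h1 h2, Vp1_inj a c h1 h2⟩ : Fin 4 ↪ Fin r × Fin s) := by
    refine legal4 _ _ 3 ?_ ?_ ?_ (gp_Vp1 a c h1 h2)
    · simp only [Vp2, Vp1, Dcfg, Dp, vec4_0, vec4_1, vec4_2, vec4_3, gg_adj,
        Nat.dist, ne_eq, Prod.mk.injEq, Fin.mk.injEq, not_and]
      omega
    · intro j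
      fin_cases j <;>
        (simp only [Vp2, Vp1, Dcfg, Dp, vec4_0, vec4_1, vec4_2, vec4_3, vec4_mk0,
          vec4_mk1, vec4_mk2, vec4_mk3, ne_eq, Prod.mk.injEq, Fin.mk.injEq, not_and]; omega)
    · intro j hj
      fin_cases j <;> first | rfl | exact absurd rfl hj

  have m4 : LegalMove (GG r s) (IsGenPosSet (GG r s)) (⟨Vp1 r s a c h1 h2, Vp1_inj a c h1 h2⟩ : Fin 4 ↪ Fin r × Fin s) (Dcfg r s (a) (c) (by omega) (h2)) := by
    refine legal4 _ _ 1 ?_ ?_ ?_ (gp_Dp a c (by omega) h2)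
    · simp only [Vp1, Vp1, Dcfg, Dp, vec4_0, vec4_1, vec4_2, vec4_3, gg_adj,
        Nat.dist, ne_eq, Prod.mk.injEq, Fin.mk.injEq, not_and]
      omega
    · intro j
      fin_cases j <;>
        (simp only [Vp1, Vp1, Dcfg, Dp, vec4_0, vec4_1, vec4_2, vec4_3, vec4_mk0,
          vec4_mk1, vec4_mk2, vec4_mk3, ne_eq, Prod.mk.injEq, Fin.mk.injEq, not_and]; omega)
    · intro j hj
      fin_cases j <;> first | rfl | exact absurd rfl hj

  refine ((((Steps.single m1).trans (Steps.single m2)).trans (Steps.single m3)).trans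
    (Steps.single m4)).mono ?_
  intro v hv
  simp only [Set.mem_union]
  exact Or.inl (Or.inl (Or.inl (Or.inl hv)))

lemma hshift (c : ℕ) (h1 : 2 < s) (h2 : c + 3 < r) :
    Steps (GG r s) (IsGenPosSet (GG r s)) (Dcfg r s 0 c (by omega) (by omega))
      (Dcfg r s 0 (c + 1) (by omega) (by omega))
      (Set.range (Dp r s 0 c (by omega) (by omega))) := by
  have m1 : LegalMove (GG r s) (IsGenPosSet (GG r s)) (Dcfg r s (0) (c) (by omega) (by omega)) (⟨Vp1 r s 0 c (by omega) (by omega), Vp1_inj 0 c (by omega) (by omega)⟩ : Fin 4 ↪ Fin r × Fin s) := by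
    refine legal4 _ _ 1 ?_ ?_ ?_ (gp_Vp1 0 c (by omega) (by omega))
    · simp only [Vp1, Vp1, Dcfg, Dp, vec4_0, vec4_1, vec4_2, vec4_3, gg_adj,
        Nat.dist, ne_eq, Prod.mk.injEq, Fin.mk.injEq, not_and]
      omega
    · intro j
      fin_cases j <;>
        (simp only [Vp1, Vp1, Dcfg, Dp, vec4_0, vec4_1, vec4_2, vec4_3, vec4_mk0,
          vec4_mk1, vec4_mk2, vec4_mk3, ne_eq, Prod.mk.injEq, Fin.mk.injEq, not_and]; omega)
    · intro j hj
      fin_cases j <;> first | rfl | exact absurd rfl hj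

  have m2 : LegalMove (GG r s) (IsGenPosSet (GG r s)) (⟨Vp1 r s 0 c (by omega) (by omega), Vp1_inj 0 c (by omega) (by omega)⟩ : Fin 4 ↪ Fin r × Fin s) (⟨Vp2 r s 0 c (by omega) (by omega), Vp2_inj 0 c (by omega) (by omega)⟩ : Fin 4 ↪ Fin r × Fin s) := by
    refine legal4 _ _ 3 ?_ ?_ ?_ (gp_Vp2 0 c (by omega) (by omega))
    · simp only [Vp1, Vp2, Dcfg, Dp, vec4_0, vec4_1, vec4_2, vec4_3, gg_adj,
        Nat.dist, ne_eq, Prod.mk.injEq, Fin.mk.injEq, not_and]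
      omega
    · intro j
      fin_cases j <;>
        (simp only [Vp1, Vp2, Dcfg, Dp, vec4_0, vec4_1, vec4_2, vec4_3, vec4_mk0,
          vec4_mk1, vec4_mk2, vec4_mk3, ne_eq, Prod.mk.injEq, Fin.mk.injEq, not_and]; omega)
    · intro j hj
      fin_cases j <;> first | rfl | exact absurd rfl hj

  have m3 : LegalMove (GG r s) (IsGenPosSet (GG r s)) (⟨Vp2 r s 0 c (by omega) (by omega), Vp2_inj 0 c (by omega) (by omega)⟩ : Fin 4 ↪ Fin r × Fin s) (⟨Hp3 r s c h1 h2, Hp3_inj c h1 h2⟩ : Fin 4 ↪ Fin r × Fin s) := by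
    refine legal4 _ _ 2 ?_ ?_ ?_ (gp_Hp3 c h1 h2)
    · simp only [Vp2, Hp3, Dcfg, Dp, vec4_0, vec4_1, vec4_2, vec4_3, gg_adj,
        Nat.dist, ne_eq, Prod.mk.injEq, Fin.mk.injEq, not_and]
      omega
    · intro j
      fin_cases j <;>
        (simp only [Vp2, Hp3, Dcfg, Dp, vec4_0, vec4_1, vec4_2, vec4_3, vec4_mk0,
          vec4_mk1, vec4_mk2, vec4_mk3, ne_eq, Prod.mk.injEq, Fin.mk.injEq, not_and]; omega)
    · intro j hj
      fin_cases j <;> first | rfl | exact absurd rfl hj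

  have m4 : LegalMove (GG r s) (IsGenPosSet (GG r s)) (⟨Hp3 r s c h1 h2, Hp3_inj c h1 h2⟩ : Fin 4 ↪ Fin r × Fin s) (⟨Hp4 r s c h1 h2, Hp4_inj c h1 h2⟩ : Fin 4 ↪ Fin r × Fin s) := by
    refine legal4 _ _ 0 ?_ ?_ ?_ (gp_Hp4 c h1 h2)
    · simp only [Hp3, Hp4, Dcfg, Dp, vec4_0, vec4_1, vec4_2, vec4_3, gg_adj,
        Nat.dist, ne_eq, Prod.mk.injEq, Fin.mk.injEq, not_and]
      omega
    · intro j
      fin_cases j <;>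
        (simp only [Hp3, Hp4, Dcfg, Dp, vec4_0, vec4_1, vec4_2, vec4_3, vec4_mk0,
          vec4_mk1, vec4_mk2, vec4_mk3, ne_eq, Prod.mk.injEq, Fin.mk.injEq, not_and]; omega)
    · intro j hj
      fin_cases j <;> first | rfl | exact absurd rfl hj

  have m5 : LegalMove (GG r s) (IsGenPosSet (GG r s)) (⟨Hp4 r s c h1 h2, Hp4_inj c h1 h2⟩ : Fin 4 ↪ Fin r × Fin s) (⟨Hp5 r s c h1 h2, Hp5_inj c h1 h2⟩ : Fin 4 ↪ Fin r × Fin s) := by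
    refine legal4 _ _ 3 ?_ ?_ ?_ (gp_Hp5 c h1 h2)
    · simp only [Hp4, Hp5, Dcfg, Dp, vec4_0, vec4_1, vec4_2, vec4_3, gg_adj,
        Nat.dist, ne_eq, Prod.mk.injEq, Fin.mk.injEq, not_and]
      omega
    · intro j
      fin_cases j <;>
        (simp only [Hp4, Hp5, Dcfg, Dp, vec4_0, vec4_1, vec4_2, vec4_3, vec4_mk0,
          vec4_mk1, vec4_mk2, vec4_mk3, ne_eq, Prod.mk.injEq, Fin.mk.injEq, not_and]; omega)
    · intro j hj
      fin_cases j <;> first | rfl | exact absurd rfl hj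

  have m6 : LegalMove (GG r s) (IsGenPosSet (GG r s)) (⟨Hp5 r s c h1 h2, Hp5_inj c h1 h2⟩ : Fin 4 ↪ Fin r × Fin s) (Dcfg r s (0) (c + 1) (by omega) (by omega)) := by
    refine legal4 _ _ 1 ?_ ?_ ?_ (gp_Dp 0 (c + 1) (by omega) (by omega))
    · simp only [Hp5, Hp5, Dcfg, Dp, vec4_0, vec4_1, vec4_2, vec4_3, gg_adj,
        Nat.dist, ne_eq, Prod.mk.injEq, Fin.mk.injEq, not_and]
      omega
    · intro j
      fin_cases j <;>
        (simp only [Hp5, Hp5, Dcfg, Dp, vec4_0, vec4_1, vec4_2, vec4_3, vec4_mk0,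
          vec4_mk1, vec4_mk2, vec4_mk3, ne_eq, Prod.mk.injEq, Fin.mk.injEq, not_and]; omega)
    · intro j hj
      fin_cases j <;> first | rfl | exact absurd rfl hj

  refine (((((Steps.single m1).trans (Steps.single m2)).trans (Steps.single m3)).trans
    (Steps.single m4)).trans (Steps.single m5)).trans (Steps.single m6) |>.mono ?_
  intro v hv
  simp only [Set.mem_union]
  exact Or.inl (Or.inl (Or.inl (Or.inl (Or.inl (Or.inl hv)))))

lemma extra33 (h1 : 2 < s) (h2 : 2 < r) :
    Steps (GG r s) (IsGenPosSet (GG r s)) (Dcfg r s 0 0 (by omega) (by omega))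
      (⟨Ep5 r s h1 h2, Ep5_inj h1 h2⟩ : Fin 4 ↪ Fin r × Fin s)
      {v : Fin r × Fin s | v.1.val = 1 ∧ v.2.val ≤ 2} := by
  have m1 : LegalMove (GG r s) (IsGenPosSet (GG r s)) (Dcfg r s (0) (0) (by omega) (by omega)) (⟨Vp1 r s 0 0 (by omega) (by omega), Vp1_inj 0 0 (by omega) (by omega)⟩ : Fin 4 ↪ Fin r × Fin s) := by
    refine legal4 _ _ 1 ?_ ?_ ?_ (gp_Vp1 0 0 (by omega) (by omega))
    · simp only [Vp1, Vp1, Dcfg, Dp, vec4_0, vec4_1, vec4_2, vec4_3, gg_adj,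
        Nat.dist, ne_eq, Prod.mk.injEq, Fin.mk.injEq, not_and]
      omega
    · intro j
      fin_cases j <;>
        (simp only [Vp1, Vp1, Dcfg, Dp, vec4_0, vec4_1, vec4_2, vec4_3, vec4_mk0,
          vec4_mk1, vec4_mk2, vec4_mk3, ne_eq, Prod.mk.injEq, Fin.mk.injEq, not_and]; omega)
    · intro j hj
      fin_cases j <;> first | rfl | exact absurd rfl hj

  have m2 : LegalMove (GG r s) (IsGenPosSet (GG r s)) (⟨Vp1 r s 0 0 (by omega) (by omega), Vp1_inj 0 0 (by omega) (by omega)⟩ : Fin 4 ↪ Fin r × Fin s) (⟨Ep2 r s h1 h2, Ep2_inj h1 h2⟩ : Fin 4 ↪ Fin r × Fin s) := by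
    refine legal4 _ _ 3 ?_ ?_ ?_ (gp_Ep2 h1 h2)
    · simp only [Vp1, Ep2, Dcfg, Dp, vec4_0, vec4_1, vec4_2, vec4_3, gg_adj,
        Nat.dist, ne_eq, Prod.mk.injEq, Fin.mk.injEq, not_and]
      omega
    · intro j
      fin_cases j <;>
        (simp only [Vp1, Ep2, Dcfg, Dp, vec4_0, vec4_1, vec4_2, vec4_3, vec4_mk0,
          vec4_mk1, vec4_mk2, vec4_mk3, ne_eq, Prod.mk.injEq, Fin.mk.injEq, not_and]; omega)
    · intro j hj
      fin_cases j <;> first | rfl | exact absurd rfl hj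

  have m3 : LegalMove (GG r s) (IsGenPosSet (GG r s)) (⟨Ep2 r s h1 h2, Ep2_inj h1 h2⟩ : Fin 4 ↪ Fin r × Fin s) (⟨Vp1 r s 0 0 (by omega) (by omega), Vp1_inj 0 0 (by omega) (by omega)⟩ : Fin 4 ↪ Fin r × Fin s) := by
    refine legal4 _ _ 3 ?_ ?_ ?_ (gp_Vp1 0 0 (by omega) (by omega))
    · simp only [Ep2, Vp1, Dcfg, Dp, vec4_0, vec4_1, vec4_2, vec4_3, gg_adj,
        Nat.dist, ne_eq, Prod.mk.injEq, Fin.mk.injEq, not_and]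
      omega
    · intro j
      fin_cases j <;>
        (simp only [Ep2, Vp1, Dcfg, Dp, vec4_0, vec4_1, vec4_2, vec4_3, vec4_mk0,
          vec4_mk1, vec4_mk2, vec4_mk3, ne_eq, Prod.mk.injEq, Fin.mk.injEq, not_and]; omega)
    · intro j hj
      fin_cases j <;> first | rfl | exact absurd rfl hj

  have m4 : LegalMove (GG r s) (IsGenPosSet (GG r s)) (⟨Vp1 r s 0 0 (by omega) (by omega), Vp1_inj 0 0 (by omega) (by omega)⟩ : Fin 4 ↪ Fin r × Fin s) (⟨Ep4 r s h1 h2, Ep4_inj h1 h2⟩ : Fin 4 ↪ Fin r × Fin s) := by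
    refine legal4 _ _ 0 ?_ ?_ ?_ (gp_Ep4 h1 h2)
    · simp only [Vp1, Ep4, Dcfg, Dp, vec4_0, vec4_1, vec4_2, vec4_3, gg_adj,
        Nat.dist, ne_eq, Prod.mk.injEq, Fin.mk.injEq, not_and]
      omega
    · intro j
      fin_cases j <;>
        (simp only [Vp1, Ep4, Dcfg, Dp, vec4_0, vec4_1, vec4_2, vec4_3, vec4_mk0,
          vec4_mk1, vec4_mk2, vec4_mk3, ne_eq, Prod.mk.injEq, Fin.mk.injEq, not_and]; omega)
    · intro j hj
      fin_cases j <;> first | rfl | exact absurd rfl hj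

  have m5 : LegalMove (GG r s) (IsGenPosSet (GG r s)) (⟨Ep4 r s h1 h2, Ep4_inj h1 h2⟩ : Fin 4 ↪ Fin r × Fin s) (⟨Ep5 r s h1 h2, Ep5_inj h1 h2⟩ : Fin 4 ↪ Fin r × Fin s) := by
    refine legal4 _ _ 1 ?_ ?_ ?_ (gp_Ep5 h1 h2)
    · simp only [Ep4, Ep5, Dcfg, Dp, vec4_0, vec4_1, vec4_2, vec4_3, gg_adj,
        Nat.dist, ne_eq, Prod.mk.injEq, Fin.mk.injEq, not_and]
      omega
    · intro j
      fin_cases j <;>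
        (simp only [Ep4, Ep5, Dcfg, Dp, vec4_0, vec4_1, vec4_2, vec4_3, vec4_mk0,
          vec4_mk1, vec4_mk2, vec4_mk3, ne_eq, Prod.mk.injEq, Fin.mk.injEq, not_and]; omega)
    · intro j hj
      fin_cases j <;> first | rfl | exact absurd rfl hj

  refine ((((Steps.single m1).trans (Steps.single m2)).trans (Steps.single m3)).trans
    (Steps.single m4)).trans (Steps.single m5) |>.mono ?_
  rintro v ⟨hx, hy⟩
  have key : v ∈ Set.range (Ep2 r s h1 h2) ∨ v ∈ Set.range (Ep4 r s h1 h2) ∨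
      v ∈ Set.range (Ep5 r s h1 h2) := by
    rcases (by omega : v.2.val = 0 ∨ v.2.val = 1 ∨ v.2.val = 2) with h | h
    · exact Or.inr (Or.inl ⟨0, by simp [Ep4, Prod.ext_iff, Fin.ext_iff]; omega⟩)
    · rcases h with h | h
      · exact Or.inr (Or.inr ⟨1, by simp [Ep5, Prod.ext_iff, Fin.ext_iff]; omega⟩)
      · exact Or.inl ⟨3, by simp [Ep2, Prod.ext_iff, Fin.ext_iff]; omega⟩
  simp only [Set.mem_union]
  rcases key with h | h | h
  · exact Or.inl (Or.inl (Or.inl (Or.inr (Or.inr h))))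
  · exact Or.inl (Or.inr (Or.inr h))
  · exact Or.inr (Or.inr h)


end Gadgets

section Assembly
variable {r s : ℕ}

lemma sweep_down (c : ℕ) (h2 : c + 2 < r) : ∀ a, (h1 : a + 1 < s) → 
    Steps (GG r s) (IsGenPosSet (GG r s)) (Dcfg r s 0 c (by omega) h2) (Dcfg r s a c h1 h2)
      {v : Fin r × Fin s | (v.1.val = c ∨ v.1.val = c + 2) ∧ v.2.val ≤ a + 1} := by
  intro a
  induction a with
  | zero =>
    intro h1
    refine (Steps.refl _).mono ?_
    rintro v ⟨hx, hy⟩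
    rcases hx with h | h <;>
      rcases (by omega : v.2.val = 0 ∨ v.2.val = 1) with h' | h'
    · exact ⟨0, by simp [Dcfg, Dp, Prod.ext_iff, Fin.ext_iff]; omega⟩
    · exact ⟨1, by simp [Dcfg, Dp, Prod.ext_iff, Fin.ext_iff]; omega⟩
    · exact ⟨2, by simp [Dcfg, Dp, Prod.ext_iff, Fin.ext_iff]; omega⟩
    · exact ⟨3, by simp [Dcfg, Dp, Prod.ext_iff, Fin.ext_iff]; omega⟩
  | succ a ih =>
    intro h1
    have prev := ih (by omega)
    have step := vdown (r := r) (s := s) a c (by omega) h2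
    refine (prev.trans step).mono ?_
    rintro v ⟨hx, hy⟩
    rcases (by omega : v.2.val ≤ a + 1 ∨ (a ≤ v.2.val ∧ v.2.val ≤ a + 2)) with h | h
    · exact Or.inl ⟨hx, h⟩
    · exact Or.inr ⟨hx, h⟩

lemma sweep_up (c : ℕ) (h2 : c + 2 < r) : ∀ a, (h1 : a + 1 < s) →
    Steps (GG r s) (IsGenPosSet (GG r s)) (Dcfg r s a c h1 h2) (Dcfg r s 0 c (by omega) h2)
      (Set.range ⇑(Dcfg r s a c h1 h2)) := by
  intro a
  induction a with
  | zero => intro h1; exact Steps.refl _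
  | succ a ih =>
    intro h1
    have step := vup (r := r) (s := s) a c (by omega) h2
    have prev := ih (by omega)
    refine (step.trans prev).mono ?_
    intro v hv
    exact Or.inl hv

lemma full_sweep (c : ℕ) (hs : 2 < s) (h2 : c + 2 < r) :
    Steps (GG r s) (IsGenPosSet (GG r s)) (Dcfg r s 0 c (by omega) h2)
      (Dcfg r s 0 c (by omega) h2)
      {v : Fin r × Fin s | v.1.val = c ∨ v.1.val = c + 2} := by
  have d := sweep_down (r := r) (s := s) c h2 (s - 2) (by omega)
  have u := sweep_up (r := r) (s := s) c h2 (s - 2) (by omega)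
  refine (d.trans u).mono ?_
  intro v hv
  have := v.2.isLt
  exact Or.inl ⟨hv, by omega⟩

lemma route (hs : 2 < s) : ∀ c, (h2 : c + 2 < r) →
    Steps (GG r s) (IsGenPosSet (GG r s)) (Dcfg r s 0 0 (by omega) (by omega))
      (Dcfg r s 0 c (by omega) h2)
      {v : Fin r × Fin s | ∃ c' ≤ c, v.1.val = c' ∨ v.1.val = c' + 2} := by
  intro c
  induction c with
  | zero =>
    intro h2
    refine (full_sweep 0 hs (by omega)).mono ?_
    rintro v ⟨c', hc', h⟩
    have : c' = 0 := by omega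
    subst this
    exact h
  | succ c ih =>
    intro h2
    have prev := ih (by omega)
    have sh := hshift (r := r) (s := s) c hs (by omega)
    have fs := full_sweep (r := r) (s := s) (c + 1) hs (by omega)
    refine ((prev.trans sh).trans fs).mono ?_
    rintro v ⟨c', hc', h⟩
    rcases (by omega : c' ≤ c ∨ c' = c + 1) with h' | h'
    · exact Or.inl (Or.inl ⟨c', h', h⟩)
    · subst h'
      exact Or.inr h

lemma mobile4 (hs : 2 < s) (hr : 2 < r) (hsr : s ≤ r) :
    IsMobileConfig (GG r s) (IsGenPosSet (GG r s))
      (Dcfg r s 0 0 (by omega) (by omega)) := by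
  rcases lt_or_ge r 4 with h4 | h4
  · -- r = 3, hence s = 3
    have hr3 : r = 3 := by omega
    have hs3 : s = 3 := by omega
    have st := (full_sweep (r := r) (s := s) 0 hs (by omega)).trans (extra33 hs hr)
    refine (st.mono ?_).isMobile (gp_Dp 0 0 (by omega) (by omega))
    intro v _
    have hx := v.1.isLt
    have hy := v.2.isLt
    rcases (by omega : v.1.val = 0 ∨ v.1.val = 1 ∨ v.1.val = 2) with h | h | h
    · exact Or.inl (Or.inl h)
    · exact Or.inr ⟨h, by omega⟩
    · exact Or.inl (Or.inr (by omega))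
  · have st := route (r := r) (s := s) hs (r - 3) (by omega)
    refine (st.mono ?_).isMobile (gp_Dp 0 0 (by omega) (by omega))
    intro v _
    have hx := v.1.isLt
    rcases le_or_gt v.1.val (r - 3) with h | h
    · exact ⟨v.1.val, h, Or.inl rfl⟩
    · exact ⟨v.1.val - 2, by omega, Or.inr (by omega)⟩

end Assembly

end Aux

theorem stmt_7 (r s : ℕ) (hs : 3 ≤ s) (hsr : s ≤ r) :
    mobGP (strongProd (pathGraph r) (pathGraph s)) = 4 := by
  have hs' : 2 < s := hs
  have hr' : 2 < r := by omega
  rw [show mobGP (strongProd (pathGraph r) (pathGraph s)) =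
      sSup {t : ℕ | ∃ f : Fin t ↪ Fin r × Fin s,
        IsMobileConfig (GG r s) (IsGenPosSet (GG r s)) f} from rfl]
  have h4 : 4 ∈ {t : ℕ | ∃ f : Fin t ↪ Fin r × Fin s,
      IsMobileConfig (GG r s) (IsGenPosSet (GG r s)) f} :=
    ⟨Dcfg r s 0 0 (by omega) (by omega), mobile4 hs' hr' hsr⟩
  have hub : ∀ t ∈ {t : ℕ | ∃ f : Fin t ↪ Fin r × Fin s,
      IsMobileConfig (GG r s) (IsGenPosSet (GG r s)) f}, t ≤ 4 := by
    rintro t ⟨f, hf⟩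
    exact upper_le_four f hf.1
  exact le_antisymm (csSup_le ⟨4, h4⟩ hub) (le_csSup ⟨4, hub⟩ h4)
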